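/- Let T = [[α, β],[β*, δ]] be a nonnegative bounded operator on X ⊕ U with minimal contraction γ. Then the Schur complement Δ = α^{1/2}(I − γ*γ)α^{1/2} is zero if and only if γ is a partial isometry with initial space equal to the closure of the range of α. -/

import Mathlib

open scoped InnerProductSpace

/-- The 2×2 block operator `[[a, b],[c, d]] : X ⊕ U → X ⊕ Y` between Hilbert space
orthogonal direct sums. -/
noncomputable def blk {X U Y : Type*}
    [NormedAddCommGroup X] [InnerProductSpace ℂ X] [CompleteSpace X]
    [NormedAddCommGroup U] [InnerProductSpace ℂ U] [CompleteSpace U]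
    [NormedAddCommGroup Y] [InnerProductSpace ℂ Y] [CompleteSpace Y]
    (a : X →L[ℂ] X) (b : U →L[ℂ] X) (c : X →L[ℂ] Y) (d : U →L[ℂ] Y) :
    WithLp 2 (X × U) →L[ℂ] WithLp 2 (X × Y) :=
  ((WithLp.prodContinuousLinearEquiv 2 ℂ X Y).symm : (X × Y) →L[ℂ] WithLp 2 (X × Y)).comp
    ((((a.comp (ContinuousLinearMap.fst ℂ X U)) + (b.comp (ContinuousLinearMap.snd ℂ X U))).prod
      ((c.comp (ContinuousLinearMap.fst ℂ X U)) + (d.comp (ContinuousLinearMap.snd ℂ X U)))).comp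
      ((WithLp.prodContinuousLinearEquiv 2 ℂ X U) : WithLp 2 (X × U) →L[ℂ] (X × U)))


section aux

variable {X U : Type*}
    [NormedAddCommGroup X] [InnerProductSpace ℂ X] [CompleteSpace X]
    [NormedAddCommGroup U] [InnerProductSpace ℂ U] [CompleteSpace U]

lemma aux_sa_inner (s : X →L[ℂ] X) (hs : IsSelfAdjoint s) (w x : X) :
    ⟪s w, x⟫_ℂ = ⟪w, s x⟫_ℂ := by
  conv_lhs => rw [← hs.adjoint_eq]
  exact ContinuousLinearMap.adjoint_inner_left s x w

/-- orthogonal of range of a self-adjoint operator is its kernel -/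
lemma aux_orth_range (s : X →L[ℂ] X) (hs : IsSelfAdjoint s) :
    (LinearMap.range (s : X →ₗ[ℂ] X))ᗮ = LinearMap.ker (s : X →ₗ[ℂ] X) := by
  ext x
  simp only [Submodule.mem_orthogonal, LinearMap.mem_ker, LinearMap.mem_range,
    ContinuousLinearMap.coe_coe]
  constructor
  · intro h
    have h2 : ⟪s x, s x⟫_ℂ = 0 := by
      rw [← aux_sa_inner s hs (s x) x]
      exact h (s (s x)) ⟨s x, rfl⟩
    exact inner_self_eq_zero.mp h2
  · rintro h u ⟨y, rfl⟩
    rw [aux_sa_inner s hs y x, h, inner_zero_right]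

end aux

set_option synthInstance.maxHeartbeats 1000000 in
set_option maxHeartbeats 1000000 in
theorem statement5' {X U : Type*}
    [NormedAddCommGroup X] [InnerProductSpace ℂ X] [CompleteSpace X]
    [NormedAddCommGroup U] [InnerProductSpace ℂ U] [CompleteSpace U]
    (α : X →L[ℂ] X) (β : U →L[ℂ] X) (δ : U →L[ℂ] U)
    (hα : α.IsPositive) (hδ : δ.IsPositive)
    (γ : X →L[ℂ] U) (hγnorm : ‖γ‖ ≤ 1)
    (hγker : LinearMap.ker (α : X →ₗ[ℂ] X) ≤ LinearMap.ker (γ : X →ₗ[ℂ] U)) :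
    (CFC.sqrt α).comp ((1 - γ.adjoint.comp γ).comp (CFC.sqrt α)) = 0 ↔
      ((∀ x ∈ (LinearMap.range (α : X →ₗ[ℂ] X)).topologicalClosure, ‖γ x‖ = ‖x‖) ∧
        (∀ x ∈ ((LinearMap.range (α : X →ₗ[ℂ] X)).topologicalClosure)ᗮ, γ x = 0)) := by
  set s := CFC.sqrt α with hs_def
  have hα0 : (0 : X →L[ℂ] X) ≤ α := (ContinuousLinearMap.nonneg_iff_isPositive α).2 hα
  have hs0 : (0 : X →L[ℂ] X) ≤ s := CFC.sqrt_nonneg α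
  have hs_pos : s.IsPositive := (ContinuousLinearMap.nonneg_iff_isPositive s).1 hs0
  have hs_sa : IsSelfAdjoint s := hs_pos.isSelfAdjoint
  have hss : s.comp s = α := CFC.sqrt_mul_sqrt_self α hα0
  -- kernels agree
  have hker : LinearMap.ker (s : X →ₗ[ℂ] X) = LinearMap.ker (α : X →ₗ[ℂ] X) := by
    ext x
    simp only [LinearMap.mem_ker, ContinuousLinearMap.coe_coe]
    constructor
    · intro h
      have : α x = s (s x) := by rw [← hss]; rfl
      rw [this, h, map_zero]
    · intro h
      have h2 : ⟪s x, s x⟫_ℂ = 0 := by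
        rw [← aux_sa_inner s hs_sa (s x) x]
        have heq : s (s x) = α x := by rw [← hss]; rfl
        rw [heq, h, inner_zero_left]
      exact inner_self_eq_zero.mp h2
  -- closures of ranges agree
  have hα_sa : IsSelfAdjoint α := hα.isSelfAdjoint
  have hclos : (LinearMap.range (s : X →ₗ[ℂ] X)).topologicalClosure
      = (LinearMap.range (α : X →ₗ[ℂ] X)).topologicalClosure := by
    rw [← Submodule.orthogonal_orthogonal_eq_closure,
        ← Submodule.orthogonal_orthogonal_eq_closure,
        aux_orth_range s hs_sa, aux_orth_range α hα_sa, hker]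
  -- the key inner product formula
  have hinner : ∀ z : X,
      ⟪(s.comp ((1 - γ.adjoint.comp γ).comp s)) z, z⟫_ℂ
        = ((‖s z‖ ^ 2 - ‖γ (s z)‖ ^ 2 : ℝ) : ℂ) := by
    intro z
    have h1 : (s.comp ((1 - γ.adjoint.comp γ).comp s)) z
        = s (s z) - s (γ.adjoint (γ (s z))) := by
      simp [ContinuousLinearMap.comp_apply, ContinuousLinearMap.sub_apply, map_sub]
    rw [h1, inner_sub_left, aux_sa_inner s hs_sa (s z) z,
      aux_sa_inner s hs_sa (γ.adjoint (γ (s z))) z,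
      ContinuousLinearMap.adjoint_inner_left]
    rw [inner_self_eq_norm_sq_to_K, inner_self_eq_norm_sq_to_K]
    push_cast
    ring_nf
    norm_cast
  constructor
  · intro h
    constructor
    · -- isometric on the closure
      intro x hx
      have hsub : (↑(LinearMap.range (s : X →ₗ[ℂ] X)) : Set X) ⊆ {x : X | ‖γ x‖ = ‖x‖} := by
        rintro _ ⟨z, rfl⟩
        have := hinner z
        rw [h] at this
        simp only [ContinuousLinearMap.zero_apply, inner_zero_left] at this
        have h2 : (‖s z‖ ^ 2 - ‖γ (s z)‖ ^ 2 : ℝ) = 0 := by exact_mod_cast this.symm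
        have h3 : ‖γ (s z)‖ ^ 2 = ‖s z‖ ^ 2 := by linarith
        exact (sq_eq_sq₀ (norm_nonneg _) (norm_nonneg _)).mp h3
      have hclosed : IsClosed {x : X | ‖γ x‖ = ‖x‖} :=
        isClosed_eq (by fun_prop) (by fun_prop)
      have hsub2 : closure (↑(LinearMap.range (s : X →ₗ[ℂ] X)) : Set X) ⊆ {x : X | ‖γ x‖ = ‖x‖} :=
        closure_minimal hsub hclosed
      have hx' : x ∈ closure (↑(LinearMap.range (s : X →ₗ[ℂ] X)) : Set X) := by
        rw [← hclos] at hx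
        exact hx
      exact hsub2 hx'
    · -- vanishes on the orthogonal complement
      intro x hx
      have hαx : ⟪α x, x⟫_ℂ = 0 := by
        apply hx
        exact Submodule.le_topologicalClosure _ ⟨x, rfl⟩
      have hsx : s x = 0 := by
        have : ⟪s x, s x⟫_ℂ = 0 := by
          rw [← aux_sa_inner s hs_sa (s x) x]
          have heq : s (s x) = α x := by rw [← hss]; rfl
          rw [heq, hαx]
        exact inner_self_eq_zero.mp this
      have hx_ker : x ∈ LinearMap.ker (α : X →ₗ[ℂ] X) := by
        rw [← hker] at *
        exact hsx
      exact hγker hx_ker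
  · rintro ⟨h1, _⟩
    have key : ∀ z : X, ⟪(s.comp ((1 - γ.adjoint.comp γ).comp s)) z, z⟫_ℂ = 0 := by
      intro z
      rw [hinner z]
      have hz : s z ∈ (LinearMap.range (α : X →ₗ[ℂ] X)).topologicalClosure := by
        rw [← hclos]
        exact Submodule.le_topologicalClosure _ ⟨z, rfl⟩
      rw [h1 (s z) hz]
      norm_num
    have := (inner_map_self_eq_zero
      ((s.comp ((1 - γ.adjoint.comp γ).comp s)) : X →ₗ[ℂ] X)).mp (fun x => key x)
    exact ContinuousLinearMap.coe_injective (this.trans ContinuousLinearMap.coe_zero.symm)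

/-- Let `T = [[α, β],[β*, δ]]` be a nonnegative bounded operator on `X ⊕ U`
with minimal contraction `γ`. Then the Schur complement `Δ = α^{1/2}(I − γ*γ)α^{1/2}` is zero
iff `γ` is a partial isometry with initial space the closure of the range of `α` (i.e. `γ` is
isometric on that closure and vanishes on its orthogonal complement). -/
theorem statement5 {X U : Type*}
    [NormedAddCommGroup X] [InnerProductSpace ℂ X] [CompleteSpace X]
    [NormedAddCommGroup U] [InnerProductSpace ℂ U] [CompleteSpace U]
    (α : X →L[ℂ] X) (β : U →L[ℂ] X) (δ : U →L[ℂ] U)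
    (hα : α.IsPositive) (hδ : δ.IsPositive)
    (hT : (blk α β β.adjoint δ).IsPositive)
    (γ : X →L[ℂ] U) (hγnorm : ‖γ‖ ≤ 1)
    (hγker : LinearMap.ker (α : X →ₗ[ℂ] X) ≤ LinearMap.ker (γ : X →ₗ[ℂ] U))
    (hγran : LinearMap.range (γ : X →ₗ[ℂ] U) ≤ (LinearMap.range (δ : U →ₗ[ℂ] U)).topologicalClosure)
    (hγfac : β.adjoint = (CFC.sqrt δ).comp (γ.comp (CFC.sqrt α))) :
    (CFC.sqrt α).comp ((1 - γ.adjoint.comp γ).comp (CFC.sqrt α)) = 0 ↔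
      ((∀ x ∈ (LinearMap.range (α : X →ₗ[ℂ] X)).topologicalClosure, ‖γ x‖ = ‖x‖) ∧
        (∀ x ∈ ((LinearMap.range (α : X →ₗ[ℂ] X)).topologicalClosure)ᗮ, γ x = 0)) := by
  exact statement5' α β δ hα hδ γ hγnorm hγker
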